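/- Let p be a prime and R → A a homomorphism of F_p-algebras. If the relative Frobenius map F_{A/R} : A ⊗_R F_*R → F_*A, a ⊗ r ↦ a^p·r, is surjective, then A is formally unramified over R, i.e. Ω_{A/R} = 0. -/

import Mathlib

open TensorProduct

/-- `FStar p R` is `R` viewed as an `R`-algebra via the Frobenius `r ↦ r ^ p`. -/
def FStar (_p : ℕ) (R : Type*) : Type _ := R

instance (p : ℕ) (R : Type*) [CommRing R] : CommRing (FStar p R) :=
  inferInstanceAs (CommRing R)

noncomputable instance (p : ℕ) (R A : Type*) [CommRing R] [CommRing A] [Algebra R A]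
    [ExpChar A p] : Algebra R (FStar p A) :=
  ((frobenius A p).comp (algebraMap R A)).toAlgebra

/-- Frobenius of `A`, as a map `A →ₐ[R] FStar p A`. -/
noncomputable def frobAlgHom (p : ℕ) (R A : Type*) [CommRing R] [CommRing A] [Algebra R A]
    [ExpChar A p] : A →ₐ[R] FStar p A :=
  { frobenius A p with commutes' := fun _ => rfl }

/-- The structure map `F_*R → F_*A`, as a map of `R`-algebras. -/
noncomputable def fstarAlgHom (p : ℕ) (R A : Type*) [CommRing R] [CommRing A] [Algebra R A]
    [ExpChar R p] [ExpChar A p] : FStar p R →ₐ[R] FStar p A :=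
  { (algebraMap R A : R →+* A) with
    commutes' := fun r => by
      show (algebraMap R A) (frobenius R p (algebraMap R R r)) = frobenius A p (algebraMap R A r)
      simp [frobenius_def, map_pow] }

/-- The relative Frobenius `A ⊗[R] F_*R → F_*A`, `a ⊗ r ↦ a^p · r`. -/
noncomputable def relFrob (p : ℕ) (R A : Type*) [CommRing R] [CommRing A] [Algebra R A]
    [ExpChar R p] [ExpChar A p] : (A ⊗[R] FStar p R) →ₐ[R] FStar p A :=
  Algebra.TensorProduct.productMap (frobAlgHom p R A) (fstarAlgHom p R A)

/-- If the relative Frobenius `A ⊗_R F_*R → F_*A` is surjective, then `A` is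
formally unramified over `R`, i.e. `Ω_{A/R} = 0`. -/
theorem stmt_0 (p : ℕ) [Fact p.Prime] (R A : Type*) [CommRing R] [CommRing A] [Algebra R A]
    [CharP R p] [CharP A p]
    (hsurj : Function.Surjective (relFrob p R A)) :
    Subsingleton (Ω[A⁄R]) := by
  have hD : ∀ x : A, (KaehlerDifferential.D R A) x = 0 := by
    intro x
    obtain ⟨y, hy⟩ := hsurj x
    have key : ∀ y : A ⊗[R] FStar p R,
        (KaehlerDifferential.D R A) (relFrob p R A y) = 0 := by
      intro y
      induction y using TensorProduct.induction_on with
      | zero => simp; exact map_zero (KaehlerDifferential.D R A)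
      | tmul a r =>
          have : relFrob p R A (a ⊗ₜ r) = a ^ p * algebraMap R A r := by
            simp [relFrob, frobAlgHom, fstarAlgHom, frobenius_def]
            rfl
          rw [this]
          rw [Derivation.leibniz, (KaehlerDifferential.D R A).map_algebraMap r, Derivation.leibniz_pow]
          have hp : (p : A) = 0 := CharP.cast_eq_zero A p
          rw [← Nat.cast_smul_eq_nsmul A p, hp, zero_smul, smul_zero, smul_zero, add_zero]
      | add u v hu hv =>
          rw [map_add]
          have h := (KaehlerDifferential.D R A).map_add (relFrob p R A u : A) (relFrob p R A v : A)
          rw [hu, hv, add_zero] at h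
          exact h
    rw [← hy]; exact key y
  have htop : (⊤ : Submodule A (Ω[A⁄R])) = ⊥ := by
    rw [← KaehlerDifferential.span_range_derivation]
    rw [Submodule.span_eq_bot]
    rintro _ ⟨x, rfl⟩
    exact hD x
  refine subsingleton_of_forall_eq 0 fun x => ?_
  have : x ∈ (⊤ : Submodule A (Ω[A⁄R])) := trivial
  rw [htop] at this
  simpa using this
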